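/- Let R be an associative unital ℝ-algebra and σ, θ ∈ R with σ² = θ² = 0 and σθ = −θσ; fix χ > 0 and let (ν, μ) be the image of (θ, σ) under the odd Ptolemy transformation with cross-ratio χ. Then νμ = −σθ and μν = σθ. Consequently, for all positive reals a, b, c, d with χ = ac/(bd), (ac+bd)·(1 + μν·√(χ⁻¹)/(1+χ⁻¹)) = (ac+bd)·(1 + σθ·√χ/(1+χ)), so performing the even super Ptolemy transformation twice restores the λ-length of the flipped edge. -/

import Mathlib

/-- For anticommuting square-zero odd elements, the odd Ptolemy transformation
satisfies `νμ = −σθ` and `μν = σθ`; hence performing the even super Ptolemy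
transformation twice restores the λ-length of the flipped edge. -/
theorem stmt_6 (R : Type*) [Ring R] [Algebra ℝ R]
    (σ θ : R) (hσ : σ * σ = 0) (hθ : θ * θ = 0) (hσθ : σ * θ = -(θ * σ))
    (χ : ℝ) (hχ : 0 < χ) (ν μ : R)
    (hν : ν = (Real.sqrt (1 + χ))⁻¹ • (σ + Real.sqrt χ • θ))
    (hμ : μ = (Real.sqrt (1 + χ))⁻¹ • (Real.sqrt χ • σ - θ)) :
    ν * μ = -(σ * θ) ∧
    μ * ν = σ * θ ∧
    ∀ a b c d : ℝ, 0 < a → 0 < b → 0 < c → 0 < d → χ = a * c / (b * d) →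
      algebraMap ℝ R (a * c + b * d)
          * (1 + (Real.sqrt χ⁻¹ / (1 + χ⁻¹)) • (μ * ν))
        = algebraMap ℝ R (a * c + b * d)
          * (1 + (Real.sqrt χ / (1 + χ)) • (σ * θ)) := by
  have h1 : (0:ℝ) < 1 + χ := by linarith
  have hs1 : Real.sqrt (1 + χ) ^ 2 = 1 + χ := Real.sq_sqrt h1.le
  have hsχ : Real.sqrt χ * Real.sqrt χ = χ := Real.mul_self_sqrt hχ.le
  have hθσ : θ * σ = -(σ * θ) := by
    rw [hσθ, neg_neg]
  have hinv : (Real.sqrt (1 + χ))⁻¹ * (Real.sqrt (1 + χ))⁻¹ = (1 + χ)⁻¹ := by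
    rw [← mul_inv]
    rw [← sq, hs1]
  have key : (σ + Real.sqrt χ • θ) * (Real.sqrt χ • σ - θ) = (-(1 + χ)) • (σ * θ) := by
    rw [mul_sub, add_mul, add_mul, smul_mul_assoc, smul_mul_assoc, mul_smul_comm,
      mul_smul_comm, hσ, hθ, hθσ, smul_zero, smul_smul, hsχ, smul_neg]
    module
  have hνμ : ν * μ = -(σ * θ) := by
    rw [hν, hμ, smul_mul_assoc, mul_smul_comm, smul_smul, hinv, key, smul_smul]
    rw [mul_neg, inv_mul_cancel₀ h1.ne', neg_smul, one_smul]
  have hμν : μ * ν = σ * θ := by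
    have : μ * ν = -(ν * μ) := by
      rw [hν, hμ]
      rw [smul_mul_smul_comm, smul_mul_smul_comm]
      rw [sub_mul, mul_add, mul_add, smul_mul_assoc, smul_mul_assoc, mul_smul_comm,
        mul_smul_comm, hσ, hθ, hθσ, smul_zero, smul_smul]
      rw [mul_sub, add_mul, add_mul, smul_mul_assoc, smul_mul_assoc, mul_smul_comm,
        mul_smul_comm, hσ, hθ, hθσ, smul_zero, smul_smul]
      module
    rw [this, hνμ, neg_neg]
  refine ⟨hνμ, hμν, ?_⟩
  intro a b c d _ _ _ _ _
  have hscal : Real.sqrt χ⁻¹ / (1 + χ⁻¹) = Real.sqrt χ / (1 + χ) := by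
    rw [Real.sqrt_inv]
    field_simp
    rw [Real.sq_sqrt hχ.le]; ring
  rw [hμν, hscal]
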